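/- Let P be an n × m matrix over 𝔽₂ and let z ∈ 𝔽₂ⁿ with Hamming weight 1, say z_α = 1 and z_β = 0 for β ≠ α. Let y ∈ 𝔽₂^m satisfy |P_β ∧ P_γ ∧ y| ≡ 0 (mod 2) for all β < γ with β ≠ α ≠ γ, and |P_β ∧ y| ≡ 0 (mod 2) for all β, and |y| ≡ 0 (mod 2). Then P' = P ⊕ z·yᵀ (which differs from P only in row α, where P'_α = P_α ⊕ y) satisfies |P'_{α'} ∧ P'_{β'} ∧ P'_{γ'}| ≡ |P_{α'} ∧ P_{β'} ∧ P_{γ'}| (mod 2) for all α' ≤ β' ≤ γ'. -/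
import Mathlib


/-- Hamming weight of a Boolean vector. -/
def wt {m : ℕ} (v : Fin m → Bool) : ℕ :=
  (Finset.univ.filter (fun i => v i = true)).card

lemma wt_cast {m : ℕ} (v : Fin m → Bool) :
    ((wt v : ℕ) : ZMod 2) = ∑ i, (if v i = true then 1 else 0 : ZMod 2) := by
  unfold wt
  rw [Finset.card_filter]
  push_cast
  rfl

lemma wt_zero {m : ℕ} (v : Fin m → Bool) (h : wt v % 2 = 0) :
    ((wt v : ℕ) : ZMod 2) = 0 := by
  have := (ZMod.natCast_eq_natCast_iff' (wt v) 0 2).mpr (by simpa using h)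
  simpa using this

lemma key {m : ℕ} (u w : Fin m → Bool) (h : wt w % 2 = 0) :
    wt (fun i => Bool.xor (u i) (w i)) % 2 = wt u % 2 := by
  rw [← ZMod.natCast_eq_natCast_iff']
  rw [wt_cast, wt_cast]
  have hw : (∑ i, (if w i = true then 1 else 0 : ZMod 2)) = 0 := by
    rw [← wt_cast]; exact wt_zero w h
  calc (∑ i, (if (Bool.xor (u i) (w i)) = true then 1 else 0 : ZMod 2))
      = ∑ i, ((if u i = true then 1 else 0 : ZMod 2) + (if w i = true then 1 else 0)) := by
        apply Finset.sum_congr rfl; intro i _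
        cases hu : u i <;> cases hw' : w i <;> simp [hu, hw'] <;> decide
    _ = ∑ i, (if u i = true then 1 else 0 : ZMod 2) := by
        rw [Finset.sum_add_distrib, hw, add_zero]

theorem stmt_18 (n m : ℕ) (P : Fin n → Fin m → Bool)
    (z : Fin n → Bool) (α : Fin n)
    (hzα : z α = true) (hz : ∀ β, β ≠ α → z β = false)
    (y : Fin m → Bool)
    (h1 : wt y % 2 = 0)
    (h2 : ∀ β, wt (fun i => P β i && y i) % 2 = 0)
    (h3 : ∀ β γ : Fin n, β < γ → β ≠ α → γ ≠ α →
      wt (fun i => P β i && P γ i && y i) % 2 = 0)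
    (P' : Fin n → Fin m → Bool)
    (hP' : ∀ β i, P' β i = Bool.xor (P β i) (z β && y i)) :
    ∀ α' β' γ' : Fin n, α' ≤ β' → β' ≤ γ' →
      wt (fun i => P' α' i && P' β' i && P' γ' i) % 2 =
      wt (fun i => P α' i && P β' i && P γ' i) % 2 := by
  have h3' : ∀ β γ : Fin n, β ≠ α → γ ≠ α →
      wt (fun i => P β i && P γ i && y i) % 2 = 0 := by
    intro β γ hβ hγ
    rcases lt_trichotomy β γ with h | h | h
    · exact h3 β γ h hβ hγ
    · subst h
      have : (fun i => P β i && P β i && y i) = (fun i => P β i && y i) := by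
        funext i; cases P β i <;> simp
      rw [this]; exact h2 β
    · have : (fun i => P β i && P γ i && y i) = (fun i => P γ i && P β i && y i) := by
        funext i; cases P β i <;> cases P γ i <;> simp
      rw [this]; exact h3 γ β h hγ hβ
  have pa : ∀ i, P' α i = Bool.xor (P α i) (y i) := by
    intro i; rw [hP', hzα]; simp
  have pn : ∀ β, β ≠ α → ∀ i, P' β i = P β i := by
    intro β hβ i; rw [hP', hz β hβ]; simp
  intro α' β' γ' hab hbc
  by_cases ha : α' = α <;> by_cases hb : β' = α <;> by_cases hc : γ' = α
  · -- all = α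
    rw [ha, hb, hc]
    have : (fun i => P' α i && P' α i && P' α i)
        = (fun i => Bool.xor (P α i && P α i && P α i) (y i)) := by
      funext i; rw [pa]; cases P α i <;> cases y i <;> rfl
    rw [this]; exact key _ _ h1
  · -- α'=β'=α, γ'≠α
    rw [ha, hb]
    have : (fun i => P' α i && P' α i && P' γ' i)
        = (fun i => Bool.xor (P α i && P α i && P γ' i) (P γ' i && y i)) := by
      funext i; rw [pa, pn γ' hc]
      cases P α i <;> cases y i <;> cases P γ' i <;> rfl
    rw [this]; exact key _ _ (h2 γ')
  · exact absurd (le_antisymm (hc ▸ hbc) (ha ▸ hab)) hb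
  · -- only α' = α
    rw [ha]
    have : (fun i => P' α i && P' β' i && P' γ' i)
        = (fun i => Bool.xor (P α i && P β' i && P γ' i) (P β' i && P γ' i && y i)) := by
      funext i; rw [pa, pn β' hb, pn γ' hc]
      cases P α i <;> cases y i <;> cases P β' i <;> cases P γ' i <;> rfl
    rw [this]; exact key _ _ (h3' β' γ' hb hc)
  · -- β'=γ'=α, α'≠α
    rw [hb, hc]
    have : (fun i => P' α' i && P' α i && P' α i)
        = (fun i => Bool.xor (P α' i && P α i && P α i) (P α' i && y i)) := by
      funext i; rw [pa, pn α' ha]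
      cases P α i <;> cases y i <;> cases P α' i <;> rfl
    rw [this]; exact key _ _ (h2 α')
  · -- only β' = α
    rw [hb]
    have : (fun i => P' α' i && P' α i && P' γ' i)
        = (fun i => Bool.xor (P α' i && P α i && P γ' i) (P α' i && P γ' i && y i)) := by
      funext i; rw [pa, pn α' ha, pn γ' hc]
      cases P α i <;> cases y i <;> cases P α' i <;> cases P γ' i <;> rfl
    rw [this]; exact key _ _ (h3' α' γ' ha hc)
  · -- only γ' = α
    rw [hc]
    have : (fun i => P' α' i && P' β' i && P' α i)
        = (fun i => Bool.xor (P α' i && P β' i && P α i) (P α' i && P β' i && y i)) := by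
      funext i; rw [pa, pn α' ha, pn β' hb]
      cases P α i <;> cases y i <;> cases P α' i <;> cases P β' i <;> rfl
    rw [this]; exact key _ _ (h3' α' β' ha hb)
  · -- none = α
    have : (fun i => P' α' i && P' β' i && P' γ' i)
        = (fun i => P α' i && P β' i && P γ' i) := by
      funext i; rw [pn α' ha, pn β' hb, pn γ' hc]
    rw [this]
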